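/- Let R be an integral domain, M a finitely generated R-module, and N a submodule of M. Then there exists a nonzero element r of R and elements v_1,...,v_n of N such that the localized module R[1/r] ⊗ N is a free R[1/r]-module with basis the images of v_1,...,v_n, and R[1/r] ⊗ M is the direct sum of R[1/r] ⊗ N and another free R[1/r]-module. -/

import Mathlib

set_option maxHeartbeats 1000000

open LocalizedModule

open nonZeroDivisors Submodule Set LocalizedModule in
theorem aux_K_data (R : Type*) [CommRing R] [IsDomain R]
    (M : Type*) [AddCommGroup M] [Module R M] [Module.Finite R M] (N : Submodule R M) :
    ∃ (n m : ℕ) (v : Fin n → M) (w : Fin m → M), (∀ i, v i ∈ N) ∧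
      LinearIndependent (Localization R⁰) ((mkLinearMap R⁰ M) ∘ Sum.elim v w) ∧
      span (Localization R⁰) (range ((mkLinearMap R⁰ M) ∘ Sum.elim v w)) = ⊤ ∧
      span (Localization R⁰) (range ((mkLinearMap R⁰ M) ∘ v))
        = span (Localization R⁰) ((mkLinearMap R⁰ M) '' ↑N) := by
  classical
  have hft : span (Localization R⁰) (range (mkLinearMap R⁰ M)) = ⊤ := by
    have := span_eq_top_of_isLocalizedModule (Localization R⁰) R⁰ (mkLinearMap R⁰ M)
      (v := Set.univ) (by simp)
    simpa only [Set.image_univ] using this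
  have hfd : FiniteDimensional (Localization R⁰) (LocalizedModule R⁰ M) := by
    obtain ⟨s, hs⟩ := Module.Finite.fg_top (R := R) (M := M)
    exact ⟨⟨s.image (mkLinearMap R⁰ M), by
      have := span_eq_top_of_isLocalizedModule (Localization R⁰) R⁰ (mkLinearMap R⁰ M)
        (v := (s : Set M)) hs
      simpa using this⟩⟩
  obtain ⟨bs, hbsub, hbspan, hbli⟩ :=
    exists_linearIndependent (Localization R⁰) ((mkLinearMap R⁰ M) '' ↑N)
  have hbes : bs ⊆ range (mkLinearMap R⁰ M) := hbsub.trans (Set.image_subset_range _ _)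
  replace hbli : LinearIndepOn (Localization R⁰) id bs := hbli
  have hesli : LinearIndependent (Localization R⁰)
      ((↑) : LinearIndepOn.extend hbli hbes → LocalizedModule R⁰ M) :=
    hbli.linearIndepOn_extend hbes
  have hessub : LinearIndepOn.extend hbli hbes ⊆ range (mkLinearMap R⁰ M) :=
    hbli.extend_subset hbes
  have hbs_sub_es : bs ⊆ LinearIndepOn.extend hbli hbes := hbli.subset_extend hbes
  have hesspan : span (Localization R⁰) (LinearIndepOn.extend hbli hbes) = ⊤ := by
    rw [hbli.span_extend_eq_span hbes, hft]
  have hesfin : (LinearIndepOn.extend hbli hbes).Finite := hesli.setFinite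
  have hbfin : bs.Finite := hesfin.subset hbs_sub_es
  have hcfin : (LinearIndepOn.extend hbli hbes \ bs).Finite := hesfin.subset diff_subset
  set es := LinearIndepOn.extend hbli hbes with hesdef
  clear_value es
  haveI := hbfin.fintype
  haveI := hcfin.fintype
  obtain ⟨e⟩ : Nonempty (Fin (Fintype.card bs) ≃ bs) := ⟨(Fintype.equivFin bs).symm⟩
  obtain ⟨e'⟩ : Nonempty (Fin (Fintype.card (es \ bs : Set _)) ≃ (es \ bs : Set _)) :=
    ⟨(Fintype.equivFin _).symm⟩
  choose v hvN hv using fun i : Fin (Fintype.card bs) => hbsub (e i).2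
  choose w hw using fun j : Fin (Fintype.card (es \ bs : Set _)) => hessub (e' j).2.1
  have h1 : range ((mkLinearMap R⁰ M) ∘ v) = bs := by
    apply Set.eq_of_subset_of_subset
    · rintro _ ⟨i, rfl⟩; rw [Function.comp_apply, hv]; exact (e i).2
    · intro x hx
      obtain ⟨i, hi⟩ := e.surjective ⟨x, hx⟩
      exact ⟨i, by rw [Function.comp_apply, hv, hi]⟩
  refine ⟨_, _, v, w, hvN, ?_, ?_, ?_⟩
  · -- linear independence
    set q : Fin (Fintype.card bs) ⊕ Fin (Fintype.card (es \ bs : Set _)) → es :=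
      Sum.elim (fun i => ⟨(e i : LocalizedModule R⁰ M), hbs_sub_es (e i).2⟩)
        (fun j => ⟨(e' j : LocalizedModule R⁰ M), (e' j).2.1⟩) with hq
    have hqinj : Function.Injective q := by
      rintro (i | i) (j | j) h <;> simp only [hq, Sum.elim_inl, Sum.elim_inr,
        Subtype.mk.injEq] at h
      · exact congrArg Sum.inl (e.injective (Subtype.ext h))
      · exact absurd (h ▸ (e i).2) (e' j).2.2
      · exact absurd (h.symm ▸ (e j).2) (e' i).2.2
      · exact congrArg Sum.inr (e'.injective (Subtype.ext h))
    have hcq : ⇑(mkLinearMap R⁰ M) ∘ Sum.elim v w = ((↑) : es → _) ∘ q := by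
      funext i
      cases i <;> simp [hq, hv, hw]
    rw [hcq]
    exact hesli.comp q hqinj
  · -- spanning
    have hr : range ((mkLinearMap R⁰ M) ∘ Sum.elim v w) = es := by
      rw [Sum.comp_elim, Sum.elim_range]
      have h2 : range ((mkLinearMap R⁰ M) ∘ w) = es \ bs := by
        apply Set.eq_of_subset_of_subset
        · rintro _ ⟨j, rfl⟩; rw [Function.comp_apply, hw]; exact (e' j).2
        · intro x hx
          obtain ⟨j, hj⟩ := e'.surjective ⟨x, hx⟩
          exact ⟨j, by rw [Function.comp_apply, hw, hj]⟩
      rw [h1, h2, Set.union_diff_cancel hbs_sub_es]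
    rw [hr, hesspan]
  · rw [h1, hbspan]

open nonZeroDivisors Submodule Set in
/-- **Generic freeness.** Let `R` be an integral domain, `M` a finitely generated `R`-module
and `N` a submodule of `M`. Then there is a nonzero `r : R` and elements `v 1, ..., v n` of `N`
such that the localization `R[1/r] ⊗ N` is a free `R[1/r]`-module with basis the images of the
`v i`, and `R[1/r] ⊗ M` is the direct sum of `R[1/r] ⊗ N` and another free `R[1/r]`-module. -/
theorem generic_freeness (R : Type*) [CommRing R] [IsDomain R]
    (M : Type*) [AddCommGroup M] [Module R M] [Module.Finite R M] (N : Submodule R M) :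
    ∃ (r : R), r ≠ 0 ∧ ∃ (n : ℕ) (v : Fin n → M), (∀ i, v i ∈ N) ∧
      (∃ b : Module.Basis (Fin n) (Localization.Away r)
          (N.localized (Submonoid.powers r)),
        ∀ i, (b i : LocalizedModule (Submonoid.powers r) M)
          = mkLinearMap (Submonoid.powers r) M (v i)) ∧
      (∃ C : Submodule (Localization.Away r) (LocalizedModule (Submonoid.powers r) M),
        IsCompl (N.localized (Submonoid.powers r)) C ∧
          Module.Free (Localization.Away r) C) := by
  classical
  obtain ⟨n, m, v, w, hvN, hKli, hKspan, hNspan⟩ := aux_K_data R M N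
  obtain ⟨k, g, hg⟩ := Module.Finite.exists_fin (R := R) (M := M)
  set f := mkLinearMap R⁰ M with hfdef
  set u : Fin n ⊕ Fin m → M := Sum.elim v w with hudef
  set B : Module.Basis (Fin n ⊕ Fin m) (Localization R⁰) (LocalizedModule R⁰ M) :=
    Module.Basis.mk hKli (le_of_eq hKspan.symm) with hBdef
  have hB : ∀ i, B i = f (u i) := fun i => by rw [hBdef, Module.Basis.mk_apply]; rfl
  clear_value B
  -- clear denominators of the coordinates of the generators
  obtain ⟨t, ht⟩ := IsLocalization.exist_integer_multiples R⁰
    (Finset.univ : Finset (Fin k × (Fin n ⊕ Fin m)))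
    (fun p => B.repr (f (g p.1)) p.2)
  choose a ha using fun p => RingHom.mem_rangeS.mp (ht p (Finset.mem_univ p))
  -- the key equations in M
  have key : ∀ j, ∃ s' : R⁰, s' • ((t : R) • g j - ∑ i, a (j, i) • u i) = 0 := by
    intro j
    apply (IsLocalizedModule.eq_zero_iff R⁰ f).mp
    have hrepr : f (g j) = ∑ i, B.repr (f (g j)) i • B i := (B.sum_repr _).symm
    rw [map_sub, map_smul, map_sum, sub_eq_zero, hrepr, Finset.smul_sum]
    refine (Finset.sum_congr rfl fun i _ => ?_).symm
    have h1 : f (a (j, i) • u i) = algebraMap R (Localization R⁰) (a (j, i)) • B i := by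
      rw [map_smul, ← hB i, algebraMap_smul]
    rw [h1, ha (j, i)]
    exact smul_assoc _ _ _
  choose sj hsj using key
  refine ⟨(t : R) * ∏ j, (sj j : R), ?_, n, v, hvN, ?_⟩
  · exact mem_nonZeroDivisors_iff_ne_zero.mp
      (mul_mem t.2 (Submonoid.prod_mem _ fun j _ => (sj j).2))
  set r : R := (t : R) * ∏ j, (sj j : R) with hrdef
  have hrne : r ≠ 0 := mem_nonZeroDivisors_iff_ne_zero.mp
      (mul_mem t.2 (Submonoid.prod_mem _ fun j _ => (sj j).2))
  have pow : Submonoid.powers r ≤ R⁰ := powers_le_nonZeroDivisors_of_noZeroDivisors hrne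
  haveI : IsDomain (Localization.Away r) := IsLocalization.isDomain_localization pow
  set fr := mkLinearMap (Submonoid.powers r) M with hfrdef
  -- units
  have hru : IsUnit (algebraMap R (Localization.Away r) r) :=
    IsLocalization.map_units (Localization.Away r) ⟨r, Submonoid.mem_powers r⟩
  have hU : ∀ x : R, x ∣ r → IsUnit (algebraMap R (Localization.Away r) x) := by
    rintro x ⟨c, hc⟩
    exact isUnit_of_mul_isUnit_left
      (show IsUnit (algebraMap R (Localization.Away r) x * algebraMap R (Localization.Away r) c)
       from by rw [← map_mul, ← hc]; exact hru)
  have hcancelA : ∀ (q : R), IsUnit (algebraMap R (Localization.Away r) q) →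
      ∀ x : LocalizedModule (Submonoid.powers r) M, q • x = 0 → x = 0 := by
    intro q hq x hx
    rw [← algebraMap_smul (Localization.Away r) q x] at hx
    calc x = ((↑hq.unit⁻¹ : Localization.Away r) * algebraMap R (Localization.Away r) q) • x := by
            rw [IsUnit.val_inv_mul, one_smul]
      _ = (↑hq.unit⁻¹ : Localization.Away r) • (algebraMap R (Localization.Away r) q • x) := by
            rw [mul_smul]
      _ = 0 := by rw [hx, smul_zero]
  have hcancelK : ∀ (q : R), IsUnit (algebraMap R (Localization R⁰) q) →
      ∀ x : LocalizedModule R⁰ M, q • x = 0 → x = 0 := by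
    intro q hq x hx
    rw [← algebraMap_smul (Localization R⁰) q x] at hx
    calc x = ((↑hq.unit⁻¹ : Localization R⁰) * algebraMap R (Localization R⁰) q) • x := by
            rw [IsUnit.val_inv_mul, one_smul]
      _ = (↑hq.unit⁻¹ : Localization R⁰) • (algebraMap R (Localization R⁰) q • x) := by
            rw [mul_smul]
      _ = 0 := by rw [hx, smul_zero]
  have hmemA : ∀ (q : R), IsUnit (algebraMap R (Localization.Away r) q) →
      ∀ (x : LocalizedModule (Submonoid.powers r) M)
        (P : Submodule (Localization.Away r) (LocalizedModule (Submonoid.powers r) M)),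
        q • x ∈ P → x ∈ P := by
    intro q hq x P hx
    have hxx : x = (↑hq.unit⁻¹ : Localization.Away r) • (q • x) := by
      rw [← algebraMap_smul (Localization.Away r) q x, ← mul_smul, IsUnit.val_inv_mul, one_smul]
    rw [hxx]
    exact P.smul_mem _ hx
  have hmemK : ∀ (q : R), IsUnit (algebraMap R (Localization R⁰) q) →
      ∀ (x : LocalizedModule R⁰ M)
        (P : Submodule (Localization R⁰) (LocalizedModule R⁰ M)),
        q • x ∈ P → x ∈ P := by
    intro q hq x P hx
    have hxx : x = (↑hq.unit⁻¹ : Localization R⁰) • (q • x) := by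
      rw [← algebraMap_smul (Localization R⁰) q x, ← mul_smul, IsUnit.val_inv_mul, one_smul]
    rw [hxx]
    exact P.smul_mem _ hx
  -- linear independence over R, hence over the localization
  have hRli : LinearIndependent R u := by
    rw [Fintype.linearIndependent_iff]
    intro c hc i
    have h0 : ∑ i, algebraMap R (Localization R⁰) (c i) • (f ∘ u) i = 0 := by
      have := congrArg f hc
      rw [map_sum, map_zero] at this
      rw [← this]
      exact Finset.sum_congr rfl fun i _ => by
        rw [map_smul, algebraMap_smul]; rfl
    have := Fintype.linearIndependent_iff.mp hKli _ h0 i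
    exact IsLocalization.injective (Localization R⁰) (le_refl R⁰) (by rwa [map_zero])
  have hAli : LinearIndependent (Localization.Away r) (fr ∘ u) :=
    hRli.of_isLocalizedModule (Localization.Away r) (Submonoid.powers r) fr
  -- spanning
  have htop : span (Localization.Away r) (range (fr ∘ u)) = ⊤ := by
    rw [eq_top_iff, ← span_eq_top_of_isLocalizedModule (Localization.Away r)
      (Submonoid.powers r) fr hg]
    rw [span_le]
    rintro x ⟨y, ⟨j, rfl⟩, rfl⟩
    have hXj : fr ((t : R) • g j - ∑ i, a (j, i) • u i) = 0 := by
      apply hcancelA (sj j : R)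
        (hU _ (Dvd.dvd.mul_left (Finset.dvd_prod_of_mem _ (Finset.mem_univ j)) (t : R)))
      rw [← map_smul, ← Submonoid.smul_def, hsj j, map_zero]
    rw [map_sub, sub_eq_zero, map_smul, map_sum] at hXj
    apply hmemA (t : R) (hU (t : R) ⟨∏ j, (sj j : R), rfl⟩)
    rw [hXj]
    exact sum_mem fun i _ => by
      rw [map_smul, ← algebraMap_smul (Localization.Away r) (a (j, i))]
      exact smul_mem _ _ (subset_span ⟨i, rfl⟩)
  set B' : Module.Basis (Fin n ⊕ Fin m) (Localization.Away r)
      (LocalizedModule (Submonoid.powers r) M) :=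
    Module.Basis.mk hAli (le_of_eq htop.symm) with hB'def
  haveI : Module.IsTorsionFree (Localization.Away r)
      (LocalizedModule (Submonoid.powers r) M) := by
    haveI := Module.Free.of_basis B'; infer_instance
  -- the two spans
  have hcompv : (fr ∘ u) ∘ Sum.inl = fr ∘ v := by funext i; simp [hudef]
  have hcompw : (fr ∘ u) ∘ Sum.inr = fr ∘ w := by funext i; simp [hudef]
  have hliv : LinearIndependent (Localization.Away r) (fr ∘ v) :=
    hcompv ▸ hAli.comp Sum.inl Sum.inl_injective
  have hliw : LinearIndependent (Localization.Away r) (fr ∘ w) :=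
    hcompw ▸ hAli.comp Sum.inr Sum.inr_injective
  have hrangesplit : range (fr ∘ u) = range (fr ∘ v) ∪ range (fr ∘ w) := by
    rw [← hcompv, ← hcompw, Set.range_comp _ Sum.inl, Set.range_comp _ Sum.inr,
      ← Set.image_union, Set.range_inl_union_range_inr, Set.image_univ]
  have hVWtop : span (Localization.Away r) (range (fr ∘ v)) ⊔
      span (Localization.Away r) (range (fr ∘ w)) = ⊤ := by
    rw [← span_union, ← hrangesplit, htop]
  have hVWdisj : Disjoint (span (Localization.Away r) (range (fr ∘ v)))
      (span (Localization.Away r) (range (fr ∘ w))) := by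
    have := hAli.disjoint_span_image (s := range Sum.inl) (t := range Sum.inr)
      isCompl_range_inl_range_inr.disjoint
    rwa [← Set.range_comp, ← Set.range_comp, hcompv, hcompw] at this
  -- the analogous disjointness over K
  have hKdisj : Disjoint (span (Localization R⁰) (range (f ∘ v)))
      (span (Localization R⁰) (range (f ∘ w))) := by
    have hcv : (f ∘ u) ∘ Sum.inl = f ∘ v := by funext i; simp [hudef]
    have hcw : (f ∘ u) ∘ Sum.inr = f ∘ w := by funext i; simp [hudef]
    have := hKli.disjoint_span_image (s := range Sum.inl) (t := range Sum.inr)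
      isCompl_range_inl_range_inr.disjoint
    rwa [← Set.range_comp, ← Set.range_comp, hcv, hcw] at this
  have hVNL : span (Localization.Away r) (range (fr ∘ v))
      ≤ N.localized (Submonoid.powers r) := by
    rw [span_le]
    rintro x ⟨i, rfl⟩
    exact ⟨v i, hvN i, 1, IsLocalizedModule.mk'_one _ _ _⟩
  -- the hard part: N.localized ⊓ W = ⊥
  have hNLW : N.localized (Submonoid.powers r) ⊓
      span (Localization.Away r) (range (fr ∘ w)) = ⊥ := by
    rw [eq_bot_iff]
    rintro x ⟨hx1, hx2⟩
    obtain ⟨mN, hmN, s1, hs1⟩ := hx1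
    obtain ⟨cc, hcc⟩ := (mem_span_range_iff_exists_fun _).mp hx2
    obtain ⟨d, hd⟩ := IsLocalization.exist_integer_multiples (Submonoid.powers r)
      Finset.univ cc
    choose b' hb' using fun j => RingHom.mem_rangeS.mp (hd j (Finset.mem_univ j))
    set y : M := ∑ j, b' j • w j with hydef
    have hdx : fr y = (d : R) • x := by
      rw [hydef, map_sum, ← hcc, Finset.smul_sum]
      refine Finset.sum_congr rfl fun j _ => ?_
      rw [map_smul, ← algebraMap_smul (Localization.Away r) (b' j), hb' j]
      exact smul_assoc _ _ _
    have hs1x : (s1 : R) • x = fr mN := by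
      rw [← hs1, ← Submonoid.smul_def, IsLocalizedModule.mk'_cancel']
    have h0 : fr ((d : R) • mN - (s1 : R) • y) = 0 := by
      rw [map_sub, map_smul, map_smul, ← hs1x, hdx, smul_comm, sub_self]
    obtain ⟨s3, hs3⟩ := (IsLocalizedModule.eq_zero_iff (Submonoid.powers r) fr).mp h0
    -- move to K
    have hK0 : (s3 : R) • ((d : R) • f mN - (s1 : R) • f y) = 0 := by
      have := congrArg f hs3
      rw [Submonoid.smul_def, map_smul, map_sub, map_smul, map_smul, map_zero] at this
      exact this
    have hUK : ∀ q : Submonoid.powers r, IsUnit (algebraMap R (Localization R⁰) (q : R)) :=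
      fun q => IsLocalization.map_units (Localization R⁰) ⟨(q : R), pow q.2⟩
    have hK1 : (d : R) • f mN = (s1 : R) • f y :=
      sub_eq_zero.mp (hcancelK _ (hUK s3) _ hK0)
    have hfy : f y ∈ span (Localization R⁰) (range (f ∘ w)) := by
      rw [hydef, map_sum]
      exact sum_mem fun j _ => by
        rw [map_smul, ← algebraMap_smul (Localization R⁰) (b' j)]
        exact smul_mem _ _ (subset_span ⟨j, rfl⟩)
    have hfmN : f mN ∈ span (Localization R⁰) (range (f ∘ w)) := by
      apply hmemK (d : R) (hUK d)
      rw [hK1, ← algebraMap_smul (Localization R⁰) (s1 : R)]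
      exact smul_mem _ _ hfy
    have hfmN2 : f mN ∈ span (Localization R⁰) (range (f ∘ v)) := by
      rw [hNspan]
      exact subset_span ⟨mN, hmN, rfl⟩
    have hfmN0 : f mN = 0 := hKdisj.le_bot ⟨hfmN2, hfmN⟩
    obtain ⟨σ, hσ⟩ := (IsLocalizedModule.eq_zero_iff R⁰ f).mp hfmN0
    have hfrmN : fr mN = 0 := by
      have h1 : algebraMap R (Localization.Away r) (σ : R) • fr mN = 0 := by
        rw [algebraMap_smul, ← map_smul, ← Submonoid.smul_def, hσ, map_zero]
      rcases smul_eq_zero.mp h1 with h | h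
      · exact absurd h (fun hh => mem_nonZeroDivisors_iff_ne_zero.mp σ.2
          (IsLocalization.injective (Localization.Away r) pow (by rwa [map_zero])))
      · exact h
    have : x = 0 := by
      apply hcancelA (s1 : R) (IsLocalization.map_units (Localization.Away r) s1)
      rw [hs1x, hfrmN]
    simp [this]
  have hNLV : N.localized (Submonoid.powers r)
      = span (Localization.Away r) (range (fr ∘ v)) := by
    apply le_antisymm _ hVNL
    have hmod := sup_inf_assoc_of_le (span (Localization.Away r) (range (fr ∘ w))) hVNL
    rw [hVWtop, top_inf_eq, inf_comm (span (Localization.Away r) (range (fr ∘ w)))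
      (N.localized (Submonoid.powers r)), hNLW, sup_bot_eq] at hmod
    exact le_of_eq hmod
  refine ⟨⟨(Module.Basis.span hliv).map (LinearEquiv.ofEq _ _ hNLV.symm), ?_⟩,
    span (Localization.Away r) (range (fr ∘ w)), ⟨?_, ?_⟩, ?_⟩
  · intro i
    rw [Module.Basis.map_apply, LinearEquiv.coe_ofEq_apply, Module.Basis.span_apply]
    rfl
  · rw [hNLV]; exact hVWdisj
  · rw [codisjoint_iff, hNLV, hVWtop]
  · exact Module.Free.of_basis (Module.Basis.span hliw)
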